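/- Assume in addition that g is three times continuously differentiable and that the level set {u ∈ ℝⁿ : Θ(u) ≤ Θ(u⁽⁰⁾)} is compact. Let (u⁽ʲ⁾) be generated by the modified B-semismooth Newton iteration with Θ(u⁽ʲ⁾) > 0 for all j, and suppose (u⁽ʲ⁾) converges to a limit point u* with I⁺(u*) ∪ I⁻(u*) = ∅. Then there exists an index j₀ ∈ ℕ such that for all j ≥ j₀ the full Newton step is accepted, i.e., Θ(u⁽ʲ⁾ + d⁽ʲ⁾) ≤ (1 − 2σ)·Θ(u⁽ʲ⁾), and hence t_j = 1 for all j ≥ j₀. -/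

import Mathlib

open scoped RealInnerProductSpace
open Filter Topology

noncomputable section

abbrev Euc (n : ℕ) := EuclideanSpace ℝ (Fin n)

variable {n : ℕ}

/-- Componentwise soft-thresholding operator `(S_{γw}(v))_k = sgn(v_k)·max(|v_k| − γw_k, 0)`. -/
def soft (γ : ℝ) (w : Fin n → ℝ) (v : Euc n) : Euc n :=
  WithLp.toLp 2 (fun k => Real.sign (v k) * max (|v k| - γ * w k) 0)

/-- The map `F(u) = u − S_{γw}(u − γ∇g(u))`. -/
def Fm (g : Euc n → ℝ) (γ : ℝ) (w : Fin n → ℝ) (u : Euc n) : Euc n :=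
  u - soft γ w (u - γ • gradient g u)

/-- The merit functional `Θ(u) = ‖F(u)‖₂²`. -/
def Th (g : Euc n → ℝ) (γ : ℝ) (w : Fin n → ℝ) (u : Euc n) : ℝ :=
  ‖Fm g γ w u‖ ^ 2

/-- The Hessian of `g` at `u`, applied to `d`: `∇²g(u)d`. -/
def hess (g : Euc n → ℝ) (u d : Euc n) : Euc n :=
  fderiv ℝ (gradient g) u d

/-- Standing assumptions on `g`: twice continuously differentiable, Lipschitz continuous
second derivative, and uniform bounds `c₁‖h‖² ≤ ⟨∇²g(u)h, h⟩ ≤ c₂‖h‖²`. -/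
structure Assump (n : ℕ) (g : Euc n → ℝ) (c₁ c₂ : ℝ) : Prop where
  contDiff : ContDiff ℝ 2 g
  lipHess : ∃ L : NNReal, LipschitzWith L fun u => fderiv ℝ (gradient g) u
  c1_pos : 0 < c₁
  c1_le_c2 : c₁ ≤ c₂
  lower : ∀ u h : Euc n, c₁ * ‖h‖ ^ 2 ≤ ⟪hess g u h, h⟫
  upper : ∀ u h : Euc n, ⟪hess g u h, h⟫ ≤ c₂ * ‖h‖ ^ 2

/-- `A⁺(u)`. -/
def Ap (g : Euc n → ℝ) (γ : ℝ) (w : Fin n → ℝ) (u : Euc n) : Set (Fin n) :=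
  {k | γ * gradient g u k + γ * w k < u k}

/-- `A⁻(u)`. -/
def Am (g : Euc n → ℝ) (γ : ℝ) (w : Fin n → ℝ) (u : Euc n) : Set (Fin n) :=
  {k | u k < γ * gradient g u k - γ * w k}

/-- `A(u) = A⁺(u) ∪ A⁻(u)`. -/
def Aset (g : Euc n → ℝ) (γ : ℝ) (w : Fin n → ℝ) (u : Euc n) : Set (Fin n) :=
  Ap g γ w u ∪ Am g γ w u

/-- `I°(u)`. -/
def Iz (g : Euc n → ℝ) (γ : ℝ) (w : Fin n → ℝ) (u : Euc n) : Set (Fin n) :=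
  {k | γ * gradient g u k - γ * w k < u k ∧ u k < γ * gradient g u k + γ * w k}

/-- `I⁺(u)`. -/
def Ipl (g : Euc n → ℝ) (γ : ℝ) (w : Fin n → ℝ) (u : Euc n) : Set (Fin n) :=
  {k | u k = γ * gradient g u k + γ * w k}

/-- `I⁻(u)`. -/
def Imi (g : Euc n → ℝ) (γ : ℝ) (w : Fin n → ℝ) (u : Euc n) : Set (Fin n) :=
  {k | u k = γ * gradient g u k - γ * w k}

/-- `A⁺₊(u)`. -/
def App (g : Euc n → ℝ) (γ : ℝ) (w : Fin n → ℝ) (u : Euc n) : Set (Fin n) :=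
  {k | γ * gradient g u k + γ * w k < u k ∧ u k < 0}

/-- `A⁻₋(u)`. -/
def Amm (g : Euc n → ℝ) (γ : ℝ) (w : Fin n → ℝ) (u : Euc n) : Set (Fin n) :=
  {k | 0 < u k ∧ u k < γ * gradient g u k - γ * w k}

/-- `I°₊(u)`. -/
def Izp (g : Euc n → ℝ) (γ : ℝ) (w : Fin n → ℝ) (u : Euc n) : Set (Fin n) :=
  {k | γ * gradient g u k - γ * w k < u k ∧ u k < γ * gradient g u k + γ * w k ∧
    γ * gradient g u k + γ * w k < 0}

/-- `I°₋(u)`. -/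
def Izm (g : Euc n → ℝ) (γ : ℝ) (w : Fin n → ℝ) (u : Euc n) : Set (Fin n) :=
  {k | 0 < γ * gradient g u k - γ * w k ∧ γ * gradient g u k - γ * w k < u k ∧
    u k < γ * gradient g u k + γ * w k}

/-- `Ā⁺(u) = A⁺(u) \ A⁺₊(u)`. -/
def ApBar (g : Euc n → ℝ) (γ : ℝ) (w : Fin n → ℝ) (u : Euc n) : Set (Fin n) :=
  Ap g γ w u \ App g γ w u

/-- `Ā⁻(u) = A⁻(u) \ A⁻₋(u)`. -/
def AmBar (g : Euc n → ℝ) (γ : ℝ) (w : Fin n → ℝ) (u : Euc n) : Set (Fin n) :=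
  Am g γ w u \ Amm g γ w u

/-- `Ā(u) = Ā⁺(u) ∪ Ā⁻(u)`. -/
def ABar (g : Euc n → ℝ) (γ : ℝ) (w : Fin n → ℝ) (u : Euc n) : Set (Fin n) :=
  ApBar g γ w u ∪ AmBar g γ w u

/-- `Ī°(u) = I°(u) \ (I°₊(u) ∪ I°₋(u))`. -/
def IzBar (g : Euc n → ℝ) (γ : ℝ) (w : Fin n → ℝ) (u : Euc n) : Set (Fin n) :=
  Iz g γ w u \ (Izp g γ w u ∪ Izm g γ w u)

/-- `Ī⁺(u) = I⁺(u) ∪ A⁺₊(u) ∪ I°₊(u)`. -/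
def IplBar (g : Euc n → ℝ) (γ : ℝ) (w : Fin n → ℝ) (u : Euc n) : Set (Fin n) :=
  Ipl g γ w u ∪ App g γ w u ∪ Izp g γ w u

/-- `Ī⁻(u) = I⁻(u) ∪ A⁻₋(u) ∪ I°₋(u)`. -/
def ImiBar (g : Euc n → ℝ) (γ : ℝ) (w : Fin n → ℝ) (u : Euc n) : Set (Fin n) :=
  Imi g γ w u ∪ Amm g γ w u ∪ Izm g γ w u

/-- `d` is a modified Newton direction at `u`. -/
def IsModDir (g : Euc n → ℝ) (γ : ℝ) (w : Fin n → ℝ) (u d : Euc n) : Prop :=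
  (∀ k ∈ ABar g γ w u, γ * hess g u d k = - Fm g γ w u k) ∧
  (∀ k ∈ IzBar g γ w u, d k = - u k) ∧
  (∀ k ∈ IplBar g γ w u, 0 ≤ d k + u k ∧ 0 ≤ γ * hess g u d k + Fm g γ w u k ∧
    (d k + u k) * (γ * hess g u d k + Fm g γ w u k) = 0) ∧
  (∀ k ∈ ImiBar g γ w u, d k + u k ≤ 0 ∧ γ * hess g u d k + Fm g γ w u k ≤ 0 ∧
    (d k + u k) * (γ * hess g u d k + Fm g γ w u k) = 0)

/-- `d` is a B-Newton direction at `u` (unmodified index sets). -/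
def IsBDir (g : Euc n → ℝ) (γ : ℝ) (w : Fin n → ℝ) (u d : Euc n) : Prop :=
  (∀ k ∈ Aset g γ w u, γ * hess g u d k = - Fm g γ w u k) ∧
  (∀ k ∈ Iz g γ w u, d k = - u k) ∧
  (∀ k ∈ Ipl g γ w u, 0 ≤ d k + u k ∧ 0 ≤ γ * hess g u d k + Fm g γ w u k ∧
    (d k + u k) * (γ * hess g u d k + Fm g γ w u k) = 0) ∧
  (∀ k ∈ Imi g γ w u, d k + u k ≤ 0 ∧ γ * hess g u d k + Fm g γ w u k ≤ 0 ∧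
    (d k + u k) * (γ * hess g u d k + Fm g γ w u k) = 0)

/-- `t = β^l` where `l` is the smallest nonnegative integer satisfying the Armijo inequality. -/
def ArmijoStepsize (g : Euc n → ℝ) (γ : ℝ) (w : Fin n → ℝ) (β σ : ℝ) (u d : Euc n)
    (t : ℝ) : Prop :=
  ∃ l : ℕ, t = β ^ l ∧
    Th g γ w (u + (β ^ l) • d) ≤ (1 - 2 * σ * β ^ l) * Th g γ w u ∧
    ∀ l' < l, ¬ (Th g γ w (u + (β ^ l') • d) ≤ (1 - 2 * σ * β ^ l') * Th g γ w u)

/-- The modified B-semismooth Newton iteration with Armijo damping. -/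
def ModIter (g : Euc n → ℝ) (γ : ℝ) (w : Fin n → ℝ) (β σ : ℝ)
    (useq dseq : ℕ → Euc n) (tseq : ℕ → ℝ) : Prop :=
  (∀ j, IsModDir g γ w (useq j) (dseq j)) ∧
  (∀ j, ArmijoStepsize g γ w β σ (useq j) (dseq j) (tseq j)) ∧
  (∀ j, useq (j + 1) = useq j + tseq j • dseq j)

/-- The B-semismooth Newton iteration (unmodified index sets) with Armijo damping. -/
def BIter (g : Euc n → ℝ) (γ : ℝ) (w : Fin n → ℝ) (β σ : ℝ)
    (useq dseq : ℕ → Euc n) (tseq : ℕ → ℝ) : Prop :=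
  (∀ j, IsBDir g γ w (useq j) (dseq j)) ∧
  (∀ j, ArmijoStepsize g γ w β σ (useq j) (dseq j) (tseq j)) ∧
  (∀ j, useq (j + 1) = useq j + tseq j • dseq j)


/-! ### Auxiliary lemmas -/

theorem euc_norm_eq (x : Euc n) : ‖x‖ = Real.sqrt (∑ k, (x k)^2) := by
  rw [EuclideanSpace.norm_eq]
  congr 1; apply Finset.sum_congr rfl; intro i _; rw [Real.norm_eq_abs, sq_abs]

theorem coord_le_norm (x : Euc n) (k : Fin n) : |x k| ≤ ‖x‖ := by
  rw [euc_norm_eq, show |x k| = Real.sqrt ((x k)^2) by rw [Real.sqrt_sq_eq_abs]]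
  apply Real.sqrt_le_sqrt
  exact Finset.single_le_sum (f := fun i => (x i)^2) (fun i _ => by positivity) (Finset.mem_univ k)

theorem norm_le_of_coord (x y : Euc n) (h : ∀ k, |x k| ≤ y k) : ‖x‖ ≤ ‖y‖ := by
  rw [euc_norm_eq, euc_norm_eq]
  apply Real.sqrt_le_sqrt
  apply Finset.sum_le_sum
  intro i _
  rw [← sq_abs (x i), ← sq_abs (y i)]
  exact pow_le_pow_left₀ (abs_nonneg _) ((h i).trans (le_abs_self _)) 2

theorem norm_combine (x F : Euc n) (c τ : ℝ) (hc : 0 ≤ c) (hτ : 0 ≤ τ)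
    (h : ∀ k, |x k| ≤ τ * |F k| + c) : ‖x‖ ≤ τ * ‖F‖ + Real.sqrt n * c := by
  set y : Euc n := τ • (WithLp.toLp 2 (fun k => |F k|) : Euc n) + c • (WithLp.toLp 2 (fun _ => (1:ℝ)) : Euc n) with hy
  have h1 : ‖x‖ ≤ ‖y‖ := by
    apply norm_le_of_coord
    intro k
    have : y k = τ * |F k| + c * 1 := rfl
    rw [this, mul_one]; exact h k
  refine h1.trans ?_
  refine (norm_add_le _ _).trans ?_
  rw [norm_smul, norm_smul, Real.norm_eq_abs, Real.norm_eq_abs, abs_of_nonneg hτ, abs_of_nonneg hc]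
  have e1 : ‖(WithLp.toLp 2 (fun k => |F k|) : Euc n)‖ = ‖F‖ := by
    rw [euc_norm_eq, euc_norm_eq]; congr 1
    apply Finset.sum_congr rfl; intro i _; rw [sq_abs]
  have e2 : ‖(WithLp.toLp 2 (fun _ => (1:ℝ)) : Euc n)‖ = Real.sqrt n := by
    rw [euc_norm_eq]; simp
  rw [e1, e2, mul_comm c]

theorem grad_contDiff (g : Euc n → ℝ) (hg : ContDiff ℝ 2 g) : ContDiff ℝ 1 (gradient g) := by
  have : gradient g = fun x => (InnerProductSpace.toDual ℝ (Euc n)).symm (fderiv ℝ g x) := rfl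
  rw [this]
  exact (InnerProductSpace.toDual ℝ (Euc n)).symm.contDiff.comp (hg.fderiv_right (by norm_num))

theorem taylor_grad (g : Euc n → ℝ) (hg : ContDiff ℝ 2 g) (L : NNReal)
    (hL : LipschitzWith L fun u => fderiv ℝ (gradient g) u) (x y : Euc n) :
    ‖gradient g y - gradient g x - hess g x (y - x)‖ ≤ L * ‖y - x‖ ^ 2 := by
  have hdiff : Differentiable ℝ (gradient g) := (grad_contDiff g hg).differentiable one_ne_zero
  set M := fderiv ℝ (gradient g) x with hM
  set f : Euc n → Euc n := fun z => gradient g z - M z with hf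
  have hfd : ∀ z, DifferentiableAt ℝ f z := fun z => (hdiff z).sub (M.differentiableAt)
  have hfderiv : ∀ z, fderiv ℝ f z = fderiv ℝ (gradient g) z - M := by
    intro z
    rw [hf]
    rw [fderiv_fun_sub (hdiff z) M.differentiableAt, M.fderiv]
  have key : ‖f y - f x‖ ≤ (L * ‖y - x‖) * ‖y - x‖ := by
    apply Convex.norm_image_sub_le_of_norm_fderiv_le (s := Metric.closedBall x ‖y - x‖)
      (fun z _ => hfd z) ?_ (convex_closedBall _ _) ?_ ?_
    · intro z hz
      rw [hfderiv z]
      have hlz := hL.dist_le_mul z x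
      rw [dist_eq_norm] at hlz
      refine hlz.trans ?_
      have hzz := Metric.mem_closedBall.mp hz
      rw [dist_eq_norm] at hzz
      exact mul_le_mul_of_nonneg_left hzz (by positivity)
    · simp
    · simp [dist_eq_norm]
  have heq : f y - f x = gradient g y - gradient g x - M (y - x) := by
    rw [hf]; simp only [map_sub]; abel
  rw [heq] at key
  calc ‖gradient g y - gradient g x - hess g x (y-x)‖
      = ‖gradient g y - gradient g x - M (y-x)‖ := rfl
  _ ≤ (L * ‖y - x‖) * ‖y - x‖ := key
  _ = L * ‖y - x‖^2 := by ring

variable {g : Euc n → ℝ} {γ : ℝ} {w : Fin n → ℝ}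

theorem Fm_apply (u : Euc n) (k : Fin n) :
    Fm g γ w u k = u k - Real.sign (u k - γ * gradient g u k) *
      max (|u k - γ * gradient g u k| - γ * w k) 0 := rfl

theorem Fm_Ap (u : Euc n) (k : Fin n) (h : γ * gradient g u k + γ * w k < u k)
    (hw : 0 < γ * w k) : Fm g γ w u k = γ * gradient g u k + γ * w k := by
  rw [Fm_apply]
  have hv : γ * w k < u k - γ * gradient g u k := by linarith
  have hv0 : 0 < u k - γ * gradient g u k := lt_trans hw hv
  rw [Real.sign_of_pos hv0, abs_of_pos hv0, max_eq_left (by linarith)]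
  ring

theorem Fm_Am (u : Euc n) (k : Fin n) (h : u k < γ * gradient g u k - γ * w k)
    (hw : 0 < γ * w k) : Fm g γ w u k = γ * gradient g u k - γ * w k := by
  rw [Fm_apply]
  have hv : u k - γ * gradient g u k < -(γ * w k) := by linarith
  have hv0 : u k - γ * gradient g u k < 0 := by linarith
  rw [Real.sign_of_neg hv0, abs_of_neg hv0, max_eq_left (by linarith)]
  ring

theorem Fm_mid (u : Euc n) (k : Fin n) (h1 : γ * gradient g u k - γ * w k ≤ u k)
    (h2 : u k ≤ γ * gradient g u k + γ * w k) : Fm g γ w u k = u k := by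
  rw [Fm_apply]
  rw [max_eq_right (by rw [sub_nonpos, abs_le]; constructor <;> linarith)]
  ring

theorem soft_eq' (γ : ℝ) (w : Fin n → ℝ) (hw : ∀ k, 0 ≤ γ * w k) (v : Euc n) (k : Fin n) :
    soft γ w v k = max (v k - γ * w k) 0 + min (v k + γ * w k) 0 := by
  have ha := hw k
  show Real.sign (v k) * max (|v k| - γ * w k) 0 = _
  rcases lt_trichotomy (v k) 0 with h | h | h
  · rw [Real.sign_of_neg h, abs_of_neg h, max_eq_right (show v k - γ * w k ≤ 0 by linarith)]
    rcases le_or_gt (v k + γ * w k) 0 with h2 | h2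
    · rw [max_eq_left (show (0:ℝ) ≤ -(v k) - γ * w k by linarith),
        min_eq_left h2]; ring
    · rw [max_eq_right (show -(v k) - γ * w k ≤ 0 by linarith),
        min_eq_right (le_of_lt h2)]; ring
  · rw [h, Real.sign_zero, abs_zero, zero_mul,
      max_eq_right (show (0:ℝ) - γ * w k ≤ 0 by linarith),
      min_eq_right (show (0:ℝ) ≤ 0 + γ * w k by linarith)]; ring
  · rw [Real.sign_of_pos h, abs_of_pos h, min_eq_right (show (0:ℝ) ≤ v k + γ * w k by linarith)]
    rcases le_or_gt (v k - γ * w k) 0 with h2 | h2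
    · rw [max_eq_right h2]; ring
    · rw [max_eq_left (le_of_lt h2)]; ring

theorem soft_cont (γ : ℝ) (w : Fin n → ℝ) (hw : ∀ k, 0 ≤ γ * w k) :
    Continuous (soft γ w : Euc n → Euc n) := by
  have heq : (soft γ w : Euc n → Euc n) =
      fun v => (WithLp.toLp 2 (fun k => max (v k - γ * w k) 0 + min (v k + γ * w k) 0) : Euc n) := by
    funext v; ext k; exact soft_eq' γ w hw v k
  rw [heq]
  have h1 : Continuous fun v : Euc n => (WithLp.equiv 2 (Fin n → ℝ) v : Fin n → ℝ) :=
    PiLp.continuous_ofLp 2 (fun _ : Fin n => ℝ)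
  have h2 : Continuous fun y : Fin n → ℝ =>
      ((WithLp.equiv 2 (Fin n → ℝ)).symm
        (fun k => max (y k - γ * w k) 0 + min (y k + γ * w k) 0) : Euc n) := by
    apply (PiLp.continuous_toLp 2 (fun _ : Fin n => ℝ)).comp
    apply continuous_pi
    intro k
    exact (((continuous_apply k).sub continuous_const).max continuous_const).add
      (((continuous_apply k).add continuous_const).min continuous_const)
  exact h2.comp h1

theorem Fm_cont (hg : ContDiff ℝ 2 g) (hγ : 0 < γ) (hw : ∀ k, 0 < w k) :
    Continuous (Fm g γ w) := by
  apply Continuous.sub continuous_id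
  exact (soft_cont γ w (fun k => le_of_lt (mul_pos hγ (hw k)))).comp
    (continuous_id.sub (((grad_contDiff g hg).continuous).const_smul γ))

theorem Th_cont (hg : ContDiff ℝ 2 g) (hγ : 0 < γ) (hw : ∀ k, 0 < w k) :
    Continuous (Th g γ w) :=
  ((Fm_cont hg hγ hw).norm).pow 2

theorem grad_coord_cont (hg : ContDiff ℝ 2 g) (k : Fin n) :
    Continuous (fun x : Euc n => gradient g x k) :=
  (continuous_apply k).comp
    ((PiLp.continuous_ofLp 2 (fun _ : Fin n => ℝ)).comp (grad_contDiff g hg).continuous)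

theorem coord_cont (k : Fin n) : Continuous (fun x : Euc n => x k) :=
  (continuous_apply k).comp (PiLp.continuous_ofLp 2 (fun _ : Fin n => ℝ))

theorem bar_cover (u : Euc n) (k : Fin n) :
    k ∈ ABar g γ w u ∨ k ∈ IzBar g γ w u ∨ k ∈ IplBar g γ w u ∨ k ∈ ImiBar g γ w u := by
  by_cases hA : k ∈ Ap g γ w u
  · by_cases hp : k ∈ App g γ w u
    · right; right; left; exact Or.inl (Or.inr hp)
    · left; exact Or.inl ⟨hA, hp⟩
  by_cases hB : k ∈ Am g γ w u
  · by_cases hm : k ∈ Amm g γ w u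
    · right; right; right; exact Or.inl (Or.inr hm)
    · left; exact Or.inr ⟨hB, hm⟩
  by_cases hIp : k ∈ Ipl g γ w u
  · right; right; left; exact Or.inl (Or.inl hIp)
  by_cases hIm : k ∈ Imi g γ w u
  · right; right; right; exact Or.inl (Or.inl hIm)
  have hIz : k ∈ Iz g γ w u := by
    simp only [Ap, Set.mem_setOf_eq, not_lt] at hA
    simp only [Am, Set.mem_setOf_eq, not_lt] at hB
    simp only [Ipl, Set.mem_setOf_eq] at hIp
    simp only [Imi, Set.mem_setOf_eq] at hIm
    exact ⟨hB.lt_of_ne (fun h => hIm h.symm), hA.lt_of_ne hIp⟩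
  by_cases hzp : k ∈ Izp g γ w u
  · right; right; left; exact Or.inr hzp
  by_cases hzm : k ∈ Izm g γ w u
  · right; right; right; exact Or.inr hzm
  · right; left
    exact ⟨hIz, fun hc => by rcases hc with h | h; exacts [hzp h, hzm h]⟩

theorem Fm_Iz (u : Euc n) (k : Fin n) (hk : k ∈ Iz g γ w u) : Fm g γ w u k = u k := by
  obtain ⟨h1, h2⟩ := hk
  exact Fm_mid u k (le_of_lt h1) (le_of_lt h2)

theorem abs_u_le_IplBar (hγ : 0 < γ) (hw : ∀ k, 0 < w k) (u : Euc n) (k : Fin n)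
    (hk : k ∈ IplBar g γ w u) : |u k| ≤ |Fm g γ w u k| := by
  have hwk := mul_pos hγ (hw k)
  rcases hk with (hk | hk) | hk
  · simp only [Ipl, Set.mem_setOf_eq] at hk
    rw [Fm_mid u k (by linarith) (by linarith)]
  · simp only [App, Set.mem_setOf_eq] at hk
    rw [Fm_Ap u k hk.1 hwk, abs_of_neg hk.2, abs_of_neg (by linarith [hk.1, hk.2] :
      γ * gradient g u k + γ * w k < 0)]
    linarith [hk.1]
  · simp only [Izp, Set.mem_setOf_eq] at hk
    rw [Fm_mid u k (by linarith [hk.1]) (by linarith [hk.2.1])]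

theorem abs_u_le_ImiBar (hγ : 0 < γ) (hw : ∀ k, 0 < w k) (u : Euc n) (k : Fin n)
    (hk : k ∈ ImiBar g γ w u) : |u k| ≤ |Fm g γ w u k| := by
  have hwk := mul_pos hγ (hw k)
  rcases hk with (hk | hk) | hk
  · simp only [Imi, Set.mem_setOf_eq] at hk
    rw [Fm_mid u k (by linarith) (by linarith)]
  · simp only [Amm, Set.mem_setOf_eq] at hk
    rw [Fm_Am u k hk.2 hwk, abs_of_pos hk.1, abs_of_pos (by linarith [hk.1, hk.2] :
      0 < γ * gradient g u k - γ * w k)]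
    linarith [hk.2]
  · simp only [Izm, Set.mem_setOf_eq] at hk
    rw [Fm_mid u k (by linarith [hk.2.1]) (by linarith [hk.2.2])]

theorem dir_bound (hγ : 0 < γ) (hw : ∀ k, 0 < w k) (u d : Euc n)
    (hd : IsModDir g γ w u d) (c₁ CM : ℝ) (hc₁ : 0 < c₁) (hCM : 0 ≤ CM)
    (hMd : ‖hess g u d‖ ≤ CM * ‖d‖)
    (hlow : c₁ * ‖d‖^2 ≤ ⟪hess g u d, d⟫) :
    ‖d‖ ≤ n * (1 + γ * CM) / (γ * c₁) * ‖Fm g γ w u‖ := by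
  obtain ⟨hdA, hdI, hdP, hdM⟩ := hd
  have key : ∀ k, d k * (γ * hess g u d k) ≤ (1 + γ * CM) * ‖d‖ * |Fm g γ w u k| := by
    intro k
    have hdk : |d k| ≤ ‖d‖ := coord_le_norm d k
    have hFk : (0:ℝ) ≤ |Fm g γ w u k| := abs_nonneg _
    have hdn : (0:ℝ) ≤ ‖d‖ := norm_nonneg _
    have caseR : γ * hess g u d k = - Fm g γ w u k →
        d k * (γ * hess g u d k) ≤ (1 + γ * CM) * ‖d‖ * |Fm g γ w u k| := by
      intro hr
      rw [hr]
      calc d k * (-Fm g γ w u k) ≤ |d k * (-Fm g γ w u k)| := le_abs_self _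
      _ = |d k| * |Fm g γ w u k| := by rw [abs_mul, abs_neg]
      _ ≤ (1 + γ * CM) * ‖d‖ * |Fm g γ w u k| := by
          nlinarith [mul_le_mul_of_nonneg_right hdk hFk,
            mul_nonneg (mul_nonneg hγ.le hCM) (mul_nonneg hdn hFk)]
    have caseS : d k = - u k → |u k| ≤ |Fm g γ w u k| →
        d k * (γ * hess g u d k) ≤ (1 + γ * CM) * ‖d‖ * |Fm g γ w u k| := by
      intro hs hu
      have hMk : |hess g u d k| ≤ CM * ‖d‖ := (coord_le_norm _ k).trans hMd
      rw [hs]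
      calc (-u k) * (γ * hess g u d k) ≤ |(-u k) * (γ * hess g u d k)| := le_abs_self _
      _ = |u k| * (γ * |hess g u d k|) := by
          rw [abs_mul, abs_neg, abs_mul, abs_of_pos hγ]
      _ ≤ |Fm g γ w u k| * (γ * (CM * ‖d‖)) := by
          gcongr
      _ ≤ (1 + γ * CM) * ‖d‖ * |Fm g γ w u k| := by nlinarith [mul_nonneg hdn hFk]
    rcases bar_cover (g := g) (γ := γ) (w := w) u k with hk | hk | hk | hk
    · exact caseR (hdA k hk)
    · exact caseS (hdI k hk) (by rw [Fm_Iz u k hk.1])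
    · obtain ⟨h1, h2, h3⟩ := hdP k hk
      rcases mul_eq_zero.mp h3 with h | h
      · exact caseS (by linarith) (abs_u_le_IplBar hγ hw u k hk)
      · exact caseR (by linarith)
    · obtain ⟨h1, h2, h3⟩ := hdM k hk
      rcases mul_eq_zero.mp h3 with h | h
      · exact caseS (by linarith) (abs_u_le_ImiBar hγ hw u k hk)
      · exact caseR (by linarith)
  have hinner : ⟪hess g u d, d⟫ = ∑ k, hess g u d k * d k := by
    simp [PiLp.inner_apply, RCLike.inner_apply]
    exact Finset.sum_congr rfl fun k _ => mul_comm _ _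
  have hsum : γ * c₁ * ‖d‖^2 ≤ ∑ k, d k * (γ * hess g u d k) := by
    calc γ * c₁ * ‖d‖^2 = γ * (c₁ * ‖d‖^2) := by ring
    _ ≤ γ * ⟪hess g u d, d⟫ := mul_le_mul_of_nonneg_left hlow hγ.le
    _ = ∑ k, d k * (γ * hess g u d k) := by
        rw [hinner, Finset.mul_sum]
        exact Finset.sum_congr rfl fun k _ => by ring
  have hsum2 : γ * c₁ * ‖d‖^2 ≤ (1 + γ * CM) * ‖d‖ * (n * ‖Fm g γ w u‖) := by
    refine hsum.trans ((Finset.sum_le_sum fun k _ => key k).trans ?_)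
    have : ∀ k : Fin n, (1 + γ * CM) * ‖d‖ * |Fm g γ w u k| ≤
        (1 + γ * CM) * ‖d‖ * ‖Fm g γ w u‖ := by
      intro k
      have h1 : |Fm g γ w u k| ≤ ‖Fm g γ w u‖ := coord_le_norm _ k
      have : (0:ℝ) ≤ (1 + γ * CM) * ‖d‖ := by positivity
      nlinarith
    refine (Finset.sum_le_sum fun k _ => this k).trans ?_
    rw [Finset.sum_const, Finset.card_univ, Fintype.card_fin]
    rw [nsmul_eq_mul]
    ring_nf
    exact le_rfl
  rcases eq_or_lt_of_le (norm_nonneg d) with h0 | h0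
  · rw [← h0]
    positivity
  · rw [div_mul_eq_mul_div, le_div_iff₀ (mul_pos hγ hc₁)]
    nlinarith

/-- Stability of the classification near `ustar`. -/
def Stab (g : Euc n → ℝ) (γ : ℝ) (w : Fin n → ℝ) (ustar x : Euc n) : Prop :=
  ∀ k, (k ∈ Ap g γ w ustar → k ∈ Ap g γ w x) ∧ (k ∈ Am g γ w ustar → k ∈ Am g γ w x) ∧
    (k ∈ Iz g γ w ustar → k ∈ Iz g γ w x)

theorem step_estimate (hg : ContDiff ℝ 2 g) (hγ : 0 < γ) (hw : ∀ k, 0 < w k) (L : NNReal)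
    (hL : LipschitzWith L fun u => fderiv ℝ (gradient g) u)
    (ustar u d : Euc n) (τ : ℝ) (hτ0 : 0 < τ) (hτ1 : τ ≤ 1)
    (htot : ∀ k, k ∈ Ap g γ w ustar ∨ k ∈ Am g γ w ustar ∨ k ∈ Iz g γ w ustar)
    (hu : Stab g γ w ustar u) (hx : Stab g γ w ustar (u + τ • d))
    (hd : IsModDir g γ w u d)
    (hcase : τ ≤ 1/2 ∨ ∀ k, k ∉ App g γ w u ∧ k ∉ Amm g γ w u ∧ k ∉ Izp g γ w u ∧
      k ∉ Izm g γ w u) :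
    ∀ k, |Fm g γ w (u + τ • d) k| ≤
      (1 - τ) * |Fm g γ w u k| + γ * ((L : ℝ) * τ^2 * ‖d‖^2) := by
  obtain ⟨hdA, hdI, hdP, hdM⟩ := hd
  intro k
  set x := u + τ • d with hxdef
  set ρ : ℝ := (L : ℝ) * τ^2 * ‖d‖^2 with hρdef
  have hρ0 : 0 ≤ ρ := by positivity
  have hwk : 0 < γ * w k := mul_pos hγ (hw k)
  have hxk : x k = u k + τ * d k := rfl
  have hxu : x - u = τ • d := by rw [hxdef]; abel
  have hRk : |gradient g x k - gradient g u k - τ * hess g u d k| ≤ ρ := by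
    have h1 := taylor_grad g hg L hL u x
    have hnx : ‖x - u‖ = τ * ‖d‖ := by rw [hxu, norm_smul, Real.norm_eq_abs, abs_of_pos hτ0]
    rw [hnx] at h1
    have h2 := (coord_le_norm (gradient g x - gradient g u - hess g u (x - u)) k).trans h1
    have h3 : (gradient g x - gradient g u - hess g u (x - u)) k
        = gradient g x k - gradient g u k - τ * hess g u d k := by
      have : hess g u (x - u) = τ • hess g u d := by
        rw [hxu]; exact (fderiv ℝ (gradient g) u).map_smul τ d
      rw [show (gradient g x - gradient g u - hess g u (x - u)) k =
        gradient g x k - gradient g u k - hess g u (x-u) k from rfl, this]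
      rfl
    rw [h3] at h2
    refine h2.trans (le_of_eq ?_)
    rw [hρdef]; ring
  set Gu := gradient g u k with hGu
  set Gx := gradient g x k with hGx
  set Hk := hess g u d k with hHk
  set Rk : ℝ := Gx - Gu - τ * Hk with hRkdef
  have hGxeq : Gx = Gu + τ * Hk + Rk := by rw [hRkdef]; ring
  have habsR : |Rk| ≤ ρ := hRk
  have hτm : 0 ≤ 1 - τ := by linarith
  -- the generic bound in the `r = 0` case
  have habs : ∀ c : ℝ, |(1-τ) * c + γ * Rk| ≤ (1-τ) * |c| + γ * ρ := by
    intro c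
    calc |(1-τ) * c + γ * Rk| ≤ |(1-τ) * c| + |γ * Rk| := abs_add_le _ _
    _ = (1-τ) * |c| + γ * |Rk| := by rw [abs_mul, abs_mul, abs_of_nonneg hτm, abs_of_pos hγ]
    _ ≤ (1-τ) * |c| + γ * ρ := by gcongr
  rcases htot k with hks | hks | hks
  · -- k ∈ Ap ustar
    have hu1 : γ * Gu + γ * w k < u k := (hu k).1 hks
    have hx1 : γ * Gx + γ * w k < x k := (hx k).1 hks
    have hFu : Fm g γ w u k = γ * Gu + γ * w k := Fm_Ap u k hu1 hwk
    have hFx : Fm g γ w x k = γ * Gx + γ * w k := Fm_Ap x k hx1 hwk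
    have hFxexp : Fm g γ w x k = Fm g γ w u k + τ * (γ * Hk) + γ * Rk := by
      rw [hFx, hFu, hGxeq]; ring
    have rzero : γ * Hk = -(Fm g γ w u k) →
        |Fm g γ w x k| ≤ (1 - τ) * |Fm g γ w u k| + γ * ρ := by
      intro hr
      rw [hFxexp, hr, show Fm g γ w u k + τ * -(Fm g γ w u k) + γ * Rk
        = (1-τ) * Fm g γ w u k + γ * Rk by ring]
      exact habs _
    by_cases hApp : k ∈ App g γ w u
    · obtain ⟨h1, h2, h3⟩ := hdP k (Or.inl (Or.inr hApp))
      rcases mul_eq_zero.mp h3 with h | h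
      · -- s = 0
        have hs : d k = - u k := by linarith
        obtain ⟨hA1, hA2⟩ : γ * Gu + γ * w k < u k ∧ u k < 0 := hApp
        have hFuneg : Fm g γ w u k < 0 := by rw [hFu]; linarith
        have hxkk : x k = (1 - τ) * u k := by rw [hxk, hs]; ring
        have hFxneg : Fm g γ w x k < 0 := by
          rw [hFx]
          calc γ * Gx + γ * w k < x k := hx1
          _ = (1-τ) * u k := hxkk
          _ ≤ 0 := mul_nonpos_of_nonneg_of_nonpos hτm hA2.le
        have hmul := mul_le_mul_of_nonneg_left (show -(Fm g γ w u k) ≤ γ * Hk by linarith) hτ0.le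
        rw [abs_of_neg hFxneg, abs_of_neg hFuneg]
        have hRlow : -Rk ≤ ρ := by have := neg_abs_le Rk; linarith
        have hγR2 : γ * (-Rk) ≤ γ * ρ := mul_le_mul_of_nonneg_left hRlow hγ.le
        linarith [hFxexp, hmul]
      · exact rzero (by linarith)
    · exact rzero (hdA k (Or.inl ⟨hu1, hApp⟩))
  · -- k ∈ Am ustar
    have hu1 : u k < γ * Gu - γ * w k := (hu k).2.1 hks
    have hx1 : x k < γ * Gx - γ * w k := (hx k).2.1 hks
    have hFu : Fm g γ w u k = γ * Gu - γ * w k := Fm_Am u k hu1 hwk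
    have hFx : Fm g γ w x k = γ * Gx - γ * w k := Fm_Am x k hx1 hwk
    have hFxexp : Fm g γ w x k = Fm g γ w u k + τ * (γ * Hk) + γ * Rk := by
      rw [hFx, hFu, hGxeq]; ring
    have rzero : γ * Hk = -(Fm g γ w u k) →
        |Fm g γ w x k| ≤ (1 - τ) * |Fm g γ w u k| + γ * ρ := by
      intro hr
      rw [hFxexp, hr, show Fm g γ w u k + τ * -(Fm g γ w u k) + γ * Rk
        = (1-τ) * Fm g γ w u k + γ * Rk by ring]
      exact habs _
    by_cases hAmm : k ∈ Amm g γ w u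
    · obtain ⟨h1, h2, h3⟩ := hdM k (Or.inl (Or.inr hAmm))
      rcases mul_eq_zero.mp h3 with h | h
      · -- s = 0
        have hs : d k = - u k := by linarith
        obtain ⟨hA1, hA2⟩ : 0 < u k ∧ u k < γ * Gu - γ * w k := hAmm
        have hFupos : 0 < Fm g γ w u k := by rw [hFu]; linarith
        have hxkk : x k = (1 - τ) * u k := by rw [hxk, hs]; ring
        have hFxpos : 0 < Fm g γ w x k := by
          rw [hFx]
          calc (0:ℝ) ≤ (1-τ) * u k := mul_nonneg hτm hA1.le
          _ = x k := hxkk.symm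
          _ < γ * Gx - γ * w k := hx1
        have hmul := mul_le_mul_of_nonneg_left
          (show γ * Hk ≤ -(Fm g γ w u k) by linarith) hτ0.le
        rw [abs_of_pos hFxpos, abs_of_pos hFupos]
        have hRhigh : Rk ≤ ρ := (le_abs_self Rk).trans habsR
        have hγR : γ * Rk ≤ γ * ρ := mul_le_mul_of_nonneg_left hRhigh hγ.le
        linarith [hFxexp, hmul]
      · exact rzero (by linarith)
    · exact rzero (hdA k (Or.inr ⟨hu1, hAmm⟩))
  · -- k ∈ Iz ustar
    have hu1 : k ∈ Iz g γ w u := (hu k).2.2 hks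
    have hx1 : k ∈ Iz g γ w x := (hx k).2.2 hks
    have hiz1 : γ * Gu - γ * w k < u k := hu1.1
    have hiz2 : u k < γ * Gu + γ * w k := hu1.2
    have hxz1 : γ * Gx - γ * w k < x k := hx1.1
    have hxz2 : x k < γ * Gx + γ * w k := hx1.2
    have hFu : Fm g γ w u k = u k := Fm_Iz u k hu1
    have hFx : Fm g γ w x k = x k := Fm_Iz x k hx1
    have hρterm : 0 ≤ γ * ρ := mul_nonneg hγ.le hρ0
    have hgx2 : γ * Gx + γ * w k = γ * Gu + γ * w k + τ * (γ * Hk) + γ * Rk := by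
      rw [hGxeq]; ring
    have hgx3 : γ * Gx - γ * w k = γ * Gu - γ * w k + τ * (γ * Hk) + γ * Rk := by
      rw [hGxeq]; ring
    have hRhigh : Rk ≤ ρ := (le_abs_self Rk).trans habsR
    have hRlow : -Rk ≤ ρ := by have := neg_abs_le Rk; linarith
    have szero : d k = - u k →
        |Fm g γ w x k| ≤ (1 - τ) * |Fm g γ w u k| + γ * ρ := by
      intro hs
      rw [hFx, hxk, hs, show u k + τ * -u k = (1-τ) * u k by ring, abs_mul,
        abs_of_nonneg hτm, hFu]
      linarith
    by_cases hzp : k ∈ Izp g γ w u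
    · obtain ⟨h1, h2, h3⟩ := hdP k (Or.inr hzp)
      rcases mul_eq_zero.mp h3 with h | h
      · exact szero (by linarith)
      · -- r = 0
        have hr : γ * Hk = -(u k) := by rw [← hFu]; linarith
        have hhalf : τ ≤ 1/2 := by
          rcases hcase with h' | h'
          · exact h'
          · exact absurd hzp ((h' k).2.2.1)
        obtain ⟨hz1, hz2, hz3⟩ : (γ * Gu - γ * w k < u k) ∧ (u k < γ * Gu + γ * w k) ∧
          (γ * Gu + γ * w k < 0) := hzp
        have huneg : u k < 0 := lt_trans hz2 hz3
        by_cases hxneg : x k ≤ 0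
        · have hmul := mul_le_mul_of_nonneg_left (show -u k ≤ d k by linarith) hτ0.le
          rw [hFx, abs_of_nonpos hxneg, hFu, abs_of_neg huneg, hxk]
          linarith
        · push_neg at hxneg
          have hmul2 := mul_le_mul_of_nonneg_right (show τ ≤ 1 - τ by linarith)
            (show (0:ℝ) ≤ -u k by linarith)
          rw [hFx, abs_of_pos hxneg, hFu, abs_of_neg huneg]
          have hγR : γ * Rk ≤ γ * ρ := mul_le_mul_of_nonneg_left hRhigh hγ.le
          have : x k < γ * Gu + γ * w k + τ * (γ * Hk) + γ * Rk := by rw [← hgx2]; exact hxz2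
          rw [hr] at this
          linarith
    by_cases hzm : k ∈ Izm g γ w u
    · obtain ⟨h1, h2, h3⟩ := hdM k (Or.inr hzm)
      rcases mul_eq_zero.mp h3 with h | h
      · exact szero (by linarith)
      · -- r = 0
        have hr : γ * Hk = -(u k) := by rw [← hFu]; linarith
        have hhalf : τ ≤ 1/2 := by
          rcases hcase with h' | h'
          · exact h'
          · exact absurd hzm ((h' k).2.2.2)
        obtain ⟨hz1, hz2, hz3⟩ : (0 < γ * Gu - γ * w k) ∧ (γ * Gu - γ * w k < u k) ∧
          (u k < γ * Gu + γ * w k) := hzm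
        have hupos : 0 < u k := lt_trans hz1 hz2
        by_cases hxpos : 0 ≤ x k
        · have hmul := mul_le_mul_of_nonneg_left (show d k ≤ -u k by linarith) hτ0.le
          rw [hFx, abs_of_nonneg hxpos, hFu, abs_of_pos hupos, hxk]
          linarith
        · push_neg at hxpos
          have hmul2 := mul_le_mul_of_nonneg_right (show τ ≤ 1 - τ by linarith) hupos.le
          rw [hFx, abs_of_neg hxpos, hFu, abs_of_pos hupos]
          have hγR : γ * (-Rk) ≤ γ * ρ := mul_le_mul_of_nonneg_left hRlow hγ.le
          have : γ * Gu - γ * w k + τ * (γ * Hk) + γ * Rk < x k := by rw [← hgx3]; exact hxz1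
          rw [hr] at this
          linarith
    · exact szero (hdI k ⟨hu1, fun hc => by
        rcases hc with h | h; exacts [hzp h, hzm h]⟩)

theorem htot_of_smooth (hγ : 0 < γ) (hw : ∀ k, 0 < w k) (ustar : Euc n)
    (hsmooth : Ipl g γ w ustar ∪ Imi g γ w ustar = ∅) :
    ∀ k, k ∈ Ap g γ w ustar ∨ k ∈ Am g γ w ustar ∨ k ∈ Iz g γ w ustar := by
  intro k
  have hIp : k ∉ Ipl g γ w ustar := fun h =>
    (Set.eq_empty_iff_forall_notMem.mp hsmooth k) (Or.inl h)
  have hIm : k ∉ Imi g γ w ustar := fun h =>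
    (Set.eq_empty_iff_forall_notMem.mp hsmooth k) (Or.inr h)
  by_cases hA : k ∈ Ap g γ w ustar
  · exact Or.inl hA
  by_cases hB : k ∈ Am g γ w ustar
  · exact Or.inr (Or.inl hB)
  refine Or.inr (Or.inr ?_)
  simp only [Ap, Set.mem_setOf_eq, not_lt] at hA
  simp only [Am, Set.mem_setOf_eq, not_lt] at hB
  simp only [Ipl, Set.mem_setOf_eq] at hIp
  simp only [Imi, Set.mem_setOf_eq] at hIm
  exact ⟨hB.lt_of_ne fun h => hIm h.symm, hA.lt_of_ne hIp⟩

theorem stab_eventually (hg : ContDiff ℝ 2 g) (ustar : Euc n) :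
    ∀ᶠ x in 𝓝 ustar, Stab g γ w ustar x := by
  have hev : ∀ k : Fin n, ∀ᶠ x in 𝓝 ustar,
      (k ∈ Ap g γ w ustar → k ∈ Ap g γ w x) ∧ (k ∈ Am g γ w ustar → k ∈ Am g γ w x) ∧
      (k ∈ Iz g γ w ustar → k ∈ Iz g γ w x) := by
    intro k
    have hca : ContinuousAt (fun x : Euc n => γ * gradient g x k + γ * w k) ustar :=
      ((continuous_const.mul (grad_coord_cont hg k)).add continuous_const).continuousAt
    have hcb : ContinuousAt (fun x : Euc n => γ * gradient g x k - γ * w k) ustar :=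
      ((continuous_const.mul (grad_coord_cont hg k)).sub continuous_const).continuousAt
    have hcc : ContinuousAt (fun x : Euc n => x k) ustar := (coord_cont k).continuousAt
    refine Filter.Eventually.and ?_ (Filter.Eventually.and ?_ ?_)
    · by_cases hk : k ∈ Ap g γ w ustar
      · have h1 : ∀ᶠ x in 𝓝 ustar, γ * gradient g x k + γ * w k < x k :=
          hca.eventually_lt hcc hk
        exact h1.mono fun x hx _ => hx
      · exact Filter.Eventually.of_forall fun x h => absurd h hk
    · by_cases hk : k ∈ Am g γ w ustar
      · have h1 : ∀ᶠ x in 𝓝 ustar, x k < γ * gradient g x k - γ * w k :=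
          hcc.eventually_lt hcb hk
        exact h1.mono fun x hx _ => hx
      · exact Filter.Eventually.of_forall fun x h => absurd h hk
    · by_cases hk : k ∈ Iz g γ w ustar
      · have h1 : ∀ᶠ x in 𝓝 ustar, γ * gradient g x k - γ * w k < x k :=
          hcb.eventually_lt hcc hk.1
        have h2 : ∀ᶠ x in 𝓝 ustar, x k < γ * gradient g x k + γ * w k :=
          hcc.eventually_lt hca hk.2
        exact (h1.and h2).mono fun x hx _ => ⟨hx.1, hx.2⟩
      · exact Filter.Eventually.of_forall fun x h => absurd h hk
  exact eventually_all.mpr hev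

theorem noexc_eventually (hg : ContDiff ℝ 2 g) (hγ : 0 < γ) (hw : ∀ k, 0 < w k) (ustar : Euc n)
    (htot : ∀ k, k ∈ Ap g γ w ustar ∨ k ∈ Am g γ w ustar ∨ k ∈ Iz g γ w ustar)
    (hFz : Fm g γ w ustar = 0) :
    ∀ᶠ x in 𝓝 ustar, ∀ k, k ∉ App g γ w x ∧ k ∉ Amm g γ w x ∧ k ∉ Izp g γ w x ∧
      k ∉ Izm g γ w x := by
  refine eventually_all.mpr fun k => ?_
  have hwk : 0 < γ * w k := mul_pos hγ (hw k)
  have hFk : Fm g γ w ustar k = 0 := by rw [hFz]; rfl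
  have hca : ContinuousAt (fun x : Euc n => γ * gradient g x k + γ * w k) ustar :=
    ((continuous_const.mul (grad_coord_cont hg k)).add continuous_const).continuousAt
  have hcb : ContinuousAt (fun x : Euc n => γ * gradient g x k - γ * w k) ustar :=
    ((continuous_const.mul (grad_coord_cont hg k)).sub continuous_const).continuousAt
  have hcc : ContinuousAt (fun x : Euc n => x k) ustar := (coord_cont k).continuousAt
  rcases htot k with hk | hk | hk
  · -- a₊(u*) = 0, u*ₖ > 0
    have ha : γ * gradient g ustar k + γ * w k = 0 := by rw [← Fm_Ap ustar k hk hwk]; exact hFk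
    have hupos : 0 < ustar k := by
      have h' : γ * gradient g ustar k + γ * w k < ustar k := hk
      linarith
    have e1 : ∀ᶠ x in 𝓝 ustar, 0 < x k := hcc.eventually (lt_mem_nhds hupos)
    have e2 : ∀ᶠ x in 𝓝 ustar, γ * gradient g x k - γ * w k < 0 :=
      hcb.eventually (gt_mem_nhds (show γ * gradient g ustar k - γ * w k < 0 by linarith))
    refine (e1.and e2).mono fun x ⟨hx1, hx2⟩ => ?_
    refine ⟨fun h => ?_, fun h => ?_, fun h => ?_, fun h => ?_⟩
    · exact absurd hx1 (not_lt.mpr h.2.le)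
    · exact absurd (h.1.trans h.2) (not_lt.mpr hx2.le)
    · exact absurd (hx1.trans h.2.1) (not_lt.mpr h.2.2.le)
    · exact absurd h.1 (not_lt.mpr hx2.le)
  · -- a₋(u*) = 0, u*ₖ < 0
    have ha : γ * gradient g ustar k - γ * w k = 0 := by rw [← Fm_Am ustar k hk hwk]; exact hFk
    have huneg : ustar k < 0 := by
      have h' : ustar k < γ * gradient g ustar k - γ * w k := hk
      linarith
    have e1 : ∀ᶠ x in 𝓝 ustar, x k < 0 := hcc.eventually (gt_mem_nhds huneg)
    have e2 : ∀ᶠ x in 𝓝 ustar, 0 < γ * gradient g x k + γ * w k :=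
      hca.eventually (lt_mem_nhds (show (0:ℝ) < γ * gradient g ustar k + γ * w k by linarith))
    refine (e1.and e2).mono fun x ⟨hx1, hx2⟩ => ?_
    refine ⟨fun h => ?_, fun h => ?_, fun h => ?_, fun h => ?_⟩
    · exact absurd (hx2.trans h.1) (not_lt.mpr hx1.le)
    · exact absurd (h.1.trans hx1) (lt_irrefl _)
    · exact absurd (hx2.trans h.2.2) (lt_irrefl _)
    · exact absurd ((h.1.trans h.2.1).trans hx1) (lt_irrefl _)
  · -- u*ₖ = 0, a₋(u*) < 0 < a₊(u*)
    have hu0 : ustar k = 0 := by rw [← Fm_Iz ustar k hk]; exact hFk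
    have h1 : γ * gradient g ustar k - γ * w k < 0 := by
      have h' : γ * gradient g ustar k - γ * w k < ustar k := hk.1
      linarith [hu0 ▸ h']
    have h2 : 0 < γ * gradient g ustar k + γ * w k := by
      have h' : ustar k < γ * gradient g ustar k + γ * w k := hk.2
      linarith [hu0 ▸ h']
    have e1 : ∀ᶠ x in 𝓝 ustar, γ * gradient g x k - γ * w k < 0 :=
      hcb.eventually (gt_mem_nhds h1)
    have e2 : ∀ᶠ x in 𝓝 ustar, 0 < γ * gradient g x k + γ * w k :=
      hca.eventually (lt_mem_nhds h2)
    refine (e1.and e2).mono fun x ⟨hx1, hx2⟩ => ?_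
    refine ⟨fun h => ?_, fun h => ?_, fun h => ?_, fun h => ?_⟩
    · exact absurd ((hx2.trans h.1).trans h.2) (lt_irrefl _)
    · exact absurd ((h.1.trans h.2).trans hx1) (lt_irrefl _)
    · exact absurd (hx2.trans h.2.2) (lt_irrefl _)
    · exact absurd (h.1.trans hx1) (lt_irrefl _)

theorem Th_nonneg (u : Euc n) : 0 ≤ Th g γ w u := by
  unfold Th; positivity

theorem Th_eq_sq (u : Euc n) : Th g γ w u = ‖Fm g γ w u‖^2 := rfl

theorem armijo_bits {β σ : ℝ} (hβ : β ∈ Set.Ioo (0:ℝ) 1) {u d : Euc n} {t : ℝ}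
    (h : ArmijoStepsize g γ w β σ u d t) :
    0 < t ∧ t ≤ 1 ∧ Th g γ w (u + t • d) ≤ (1 - 2*σ*t) * Th g γ w u := by
  obtain ⟨l, ht, h1, h2⟩ := h
  refine ⟨ht ▸ pow_pos hβ.1 l, ht ▸ pow_le_one₀ hβ.1.le hβ.2.le, ?_⟩
  rw [ht]; exact h1

theorem armijo_full {β σ : ℝ} (hβ : β ∈ Set.Ioo (0:ℝ) 1) {u d : Euc n} {t : ℝ}
    (h : ArmijoStepsize g γ w β σ u d t)
    (hfull : Th g γ w (u + d) ≤ (1 - 2*σ) * Th g γ w u) : t = 1 := by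
  obtain ⟨l, ht, h1, h2⟩ := h
  rcases Nat.eq_zero_or_pos l with hl | hl
  · rw [ht, hl, pow_zero]
  · exact absurd (by simpa using hfull) (h2 0 hl)

theorem arith_bound (σ τ A : ℝ) (hσ0 : 0 < σ) (hσ2 : σ ≤ 1/2) (hτ0 : 0 < τ) (hτ1 : τ ≤ 1)
    (hA0 : 0 ≤ A) (h1 : τ * (1+A)^2 ≤ 1) : ((1-τ) + A * τ^2)^2 ≤ 1 - 2*σ*τ := by
  have h2 : τ^3 ≤ τ := by
    calc τ^3 ≤ τ^1 := pow_le_pow_of_le_one hτ0.le hτ1 (by omega)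
    _ = τ := pow_one τ
  nlinarith [mul_pos hσ0 hτ0, mul_nonneg hA0 hτ0.le, sq_nonneg τ, sq_nonneg (A*τ),
    mul_nonneg (mul_nonneg hA0 hτ0.le) hτ0.le,
    mul_le_mul_of_nonneg_left h1 hτ0.le,
    mul_nonneg (mul_nonneg (mul_nonneg hA0 hA0) hτ0.le) hτ0.le]

set_option maxHeartbeats 1000000 in
/-- if `g ∈ C³`, the iterates converge to a point `u*` at which
`F` is smooth, then eventually the full Newton step is accepted and `t_j = 1`. -/
theorem stmt12 {n : ℕ} (hn : 1 ≤ n) (c₁ c₂ : ℝ) (g : Euc n → ℝ) (hg : Assump n g c₁ c₂)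
    (hg3 : ContDiff ℝ 3 g)
    (w : Fin n → ℝ) (hw : ∀ k, 0 < w k) (γ : ℝ) (hγ : 0 < γ)
    (β σ : ℝ) (hβ : β ∈ Set.Ioo (0 : ℝ) 1) (hσ : σ ∈ Set.Ioo (0 : ℝ) (1 / 2))
    (useq dseq : ℕ → Euc n) (tseq : ℕ → ℝ)
    (hiter : ModIter g γ w β σ useq dseq tseq)
    (hpos : ∀ j, 0 < Th g γ w (useq j))
    (hcpt : IsCompact {x : Euc n | Th g γ w x ≤ Th g γ w (useq 0)})
    (ustar : Euc n) (hconv : Tendsto useq atTop (𝓝 ustar))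
    (hsmooth : Ipl g γ w ustar ∪ Imi g γ w ustar = ∅) :
    ∃ j₀ : ℕ, ∀ j ≥ j₀,
      Th g γ w (useq j + dseq j) ≤ (1 - 2 * σ) * Th g γ w (useq j) ∧ tseq j = 1 := by
  obtain ⟨hβ0, hβ1⟩ := hβ
  obtain ⟨hσ0, hσhalf⟩ := hσ
  obtain ⟨hdirs, harm, hupd⟩ := hiter
  obtain ⟨L, hL⟩ := hg.lipHess
  have hg2 : ContDiff ℝ 2 g := hg.contDiff
  have hc₁ : 0 < c₁ := hg.c1_pos
  have htot := htot_of_smooth (g := g) hγ hw ustar hsmooth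
  -- bound on the Hessian near `ustar`
  set CM : ℝ := ‖fderiv ℝ (gradient g) ustar‖ + L with hCMdef
  have hCM0 : 0 ≤ CM := by positivity
  have hMle : ∀ u : Euc n, dist u ustar ≤ 1 → ∀ h : Euc n, ‖hess g u h‖ ≤ CM * ‖h‖ := by
    intro u hu h
    have h2 := hL.dist_le_mul u ustar
    have h1 : ‖fderiv ℝ (gradient g) u‖ ≤ CM := by
      have e1 : fderiv ℝ (gradient g) u = fderiv ℝ (gradient g) ustar +
          (fderiv ℝ (gradient g) u - fderiv ℝ (gradient g) ustar) := by abel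
      rw [e1]
      refine (norm_add_le _ _).trans ?_
      rw [hCMdef]
      have h3 : ‖fderiv ℝ (gradient g) u - fderiv ℝ (gradient g) ustar‖ ≤ L * dist u ustar := by
        rw [← dist_eq_norm]; exact h2
      have h4 : (L : ℝ) * dist u ustar ≤ L * 1 := by
        apply mul_le_mul_of_nonneg_left hu L.coe_nonneg
      linarith [h3.trans h4]
    calc ‖hess g u h‖ ≤ ‖fderiv ℝ (gradient g) u‖ * ‖h‖ :=
      (fderiv ℝ (gradient g) u).le_opNorm h
    _ ≤ CM * ‖h‖ := mul_le_mul_of_nonneg_right h1 (norm_nonneg _)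
  set κ : ℝ := n * (1 + γ * CM) / (γ * c₁) with hκdef
  have hκ0 : 0 ≤ κ := by positivity
  have hdb : ∀ j, dist (useq j) ustar ≤ 1 → ‖dseq j‖ ≤ κ * ‖Fm g γ w (useq j)‖ := fun j hj =>
    dir_bound hγ hw _ _ (hdirs j) c₁ CM hc₁ hCM0 (hMle _ hj _) (hg.lower _ _)
  -- stability neighborhood
  obtain ⟨ε₀, hε₀, hstab⟩ := Metric.eventually_nhds_iff.mp (stab_eventually (g := g) (γ := γ)
    (w := w) hg2 ustar)
  set ε : ℝ := min ε₀ 1 with hεdef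
  have hε : 0 < ε := lt_min hε₀ one_pos
  have hεle1 : ε ≤ 1 := min_le_right _ _
  have hεle0 : ε ≤ ε₀ := min_le_left _ _
  -- merit function facts
  have hThc := Th_cont (g := g) hg2 hγ hw
  have hTt : Tendsto (fun j => Th g γ w (useq j)) atTop (𝓝 (Th g γ w ustar)) :=
    (hThc.tendsto ustar).comp hconv
  have hbits := fun j => armijo_bits (g := g) ⟨hβ0, hβ1⟩ (harm j)
  have hstep : ∀ j, Th g γ w (useq (j+1)) ≤ (1 - 2*σ*tseq j) * Th g γ w (useq j) := by
    intro j; rw [hupd j]; exact (hbits j).2.2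
  have hTmono : ∀ j, Th g γ w (useq (j+1)) ≤ Th g γ w (useq j) := by
    intro j
    refine (hstep j).trans ?_
    have h1 : 0 < tseq j := (hbits j).1
    nlinarith [Th_nonneg (g := g) (γ := γ) (w := w) (useq j), mul_pos hσ0 h1]
  have hanti : Antitone fun j => Th g γ w (useq j) := antitone_nat_of_succ_le hTmono
  have hTlb : ∀ j, Th g γ w ustar ≤ Th g γ w (useq j) := fun j => hanti.le_of_tendsto hTt j
  have hFt : Tendsto (fun j => ‖Fm g γ w (useq j)‖) atTop (𝓝 ‖Fm g γ w ustar‖) :=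
    (((Fm_cont hg2 hγ hw).norm).tendsto ustar).comp hconv
  -- Step 1: the limit is a zero of `F`.
  have hFz : Fm g γ w ustar = 0 := by
    by_contra hne
    have hTpos : 0 < Th g γ w ustar := by
      rcases lt_or_eq_of_le (Th_nonneg (g := g) (γ := γ) (w := w) ustar) with h | h
      · exact h
      · exact absurd (norm_eq_zero.mp (by
          have := h.symm
          rw [Th_eq_sq] at this
          exact pow_eq_zero_iff two_ne_zero |>.mp this)) hne
    -- step sizes tend to zero
    have htd : Tendsto (fun j => Th g γ w (useq j) - Th g γ w (useq (j+1))) atTop (𝓝 0) := by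
      have h2 : Tendsto (fun j => Th g γ w (useq (j+1))) atTop (𝓝 (Th g γ w ustar)) :=
        hTt.comp (tendsto_add_atTop_nat 1)
      simpa using hTt.sub h2
    have ht0 : Tendsto tseq atTop (𝓝 0) := by
      have hub : ∀ j, tseq j ≤ (Th g γ w (useq j) - Th g γ w (useq (j+1))) *
          (1 / (2*σ*Th g γ w ustar)) := by
        intro j
        have h1 := hstep j
        have h2 := hTlb j
        have h3 : 0 < tseq j := (hbits j).1
        rw [mul_one_div, le_div_iff₀ (by positivity)]
        nlinarith [h1, h2, mul_nonneg (mul_nonneg hσ0.le h3.le) (sub_nonneg.mpr h2)]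
      have hlb : ∀ j, 0 ≤ tseq j := fun j => (hbits j).1.le
      have hlim : Tendsto (fun j => (Th g γ w (useq j) - Th g γ w (useq (j+1))) *
          (1 / (2*σ*Th g γ w ustar))) atTop (𝓝 0) := by
        simpa using htd.mul_const (1 / (2*σ*Th g γ w ustar))
      exact tendsto_of_tendsto_of_tendsto_of_le_of_le tendsto_const_nhds hlim hlb hub
    -- constants
    set Φ : ℝ := ‖Fm g γ w ustar‖ + 1 with hΦdef
    have hΦ0 : 0 < Φ := by positivity
    set D : ℝ := κ * Φ with hDdef
    have hD0 : 0 ≤ D := by positivity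
    set A : ℝ := Real.sqrt n * γ * L * κ^2 * Φ with hAdef
    have hA0 : 0 ≤ A := by positivity
    set τb : ℝ := min (min (1/2) (1/(1+A)^2)) (ε/(2*(D+1))) with hτbdef
    have hτb0 : 0 < τb := by
      apply lt_min (lt_min (by norm_num) (by positivity)) (by positivity)
    have hτbhalf : τb ≤ 1/2 := (min_le_left _ _).trans (min_le_left _ _)
    have hτbA : τb ≤ 1/(1+A)^2 := (min_le_left _ _).trans (min_le_right _ _)
    have hτbε : τb ≤ ε/(2*(D+1)) := min_le_right _ _
    -- pick a large index
    have e1 : ∀ᶠ j in atTop, dist (useq j) ustar < ε/2 :=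
      hconv.eventually (Metric.eventually_nhds_iff.mpr ⟨ε/2, by positivity, fun y hy => hy⟩)
    have e2 : ∀ᶠ j in atTop, ‖Fm g γ w (useq j)‖ ≤ Φ :=
      hFt.eventually (eventually_le_nhds (by rw [hΦdef]; linarith))
    have e3 : ∀ᶠ j in atTop, tseq j ≤ β * τb :=
      ht0.eventually (eventually_le_nhds (by positivity))
    obtain ⟨j, hj1, hj2, hj3⟩ := (e1.and (e2.and e3)).exists
    obtain ⟨l, htl, hineq, hmin⟩ := harm j
    have hl0 : l ≠ 0 := by
      intro h
      rw [h, pow_zero] at htl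
      have : β * τb < 1 := by nlinarith
      rw [htl] at hj3; linarith
    set τ : ℝ := β ^ (l - 1) with hτdef
    have hlsucc : l - 1 + 1 = l := Nat.succ_pred_eq_of_pos (Nat.pos_of_ne_zero hl0)
    have htβτ : tseq j = β * τ := by
      rw [htl, hτdef, ← pow_succ', hlsucc]
    have hτ0 : 0 < τ := pow_pos hβ0 _
    have hττb : τ ≤ τb := by
      have : β * τ ≤ β * τb := htβτ ▸ hj3
      exact le_of_mul_le_mul_left this hβ0
    have hτhalf : τ ≤ 1/2 := hττb.trans hτbhalf
    have hτ1 : τ ≤ 1 := by linarith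
    -- stability and direction bounds at `useq j`
    have hd1 : dist (useq j) ustar ≤ 1 := by
      have : ε/2 ≤ 1 := by linarith
      linarith [hj1]
    have hstabu : Stab g γ w ustar (useq j) := hstab (lt_of_lt_of_le hj1 (by linarith))
    have hdbj : ‖dseq j‖ ≤ κ * ‖Fm g γ w (useq j)‖ := hdb j hd1
    have hdD : ‖dseq j‖ ≤ D := by
      refine hdbj.trans ?_
      rw [hDdef]
      exact mul_le_mul_of_nonneg_left hj2 hκ0
    have hxdist : dist (useq j + τ • dseq j) ustar < ε₀ := by
      have h1 : dist (useq j + τ • dseq j) (useq j) = τ * ‖dseq j‖ := by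
        rw [dist_eq_norm, add_sub_cancel_left, norm_smul, Real.norm_eq_abs, abs_of_pos hτ0]
      have h2 : τ * ‖dseq j‖ ≤ ε/2 := by
        have h3 : τ * ‖dseq j‖ ≤ (ε/(2*(D+1))) * D :=
          mul_le_mul (hττb.trans hτbε) hdD (norm_nonneg _) (by positivity)
        refine h3.trans ?_
        rw [div_mul_eq_mul_div, div_le_iff₀ (by positivity)]
        nlinarith
      calc dist (useq j + τ • dseq j) ustar
          ≤ dist (useq j + τ • dseq j) (useq j) + dist (useq j) ustar := dist_triangle _ _ _
      _ < ε/2 + ε/2 := by rw [h1]; exact add_lt_add_of_le_of_lt h2 hj1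
      _ = ε := by ring
      _ ≤ ε₀ := hεle0
    have hstabx : Stab g γ w ustar (useq j + τ • dseq j) := hstab hxdist
    -- the decrease estimate contradicts the failure of the Armijo test at `l - 1`
    have hest := step_estimate hg2 hγ hw L hL ustar (useq j) (dseq j) τ hτ0 hτ1 htot
      hstabu hstabx (hdirs j) (Or.inl hτhalf)
    have hnorm : ‖Fm g γ w (useq j + τ • dseq j)‖ ≤
        (1-τ) * ‖Fm g γ w (useq j)‖ + Real.sqrt n * (γ * ((L:ℝ) * τ^2 * ‖dseq j‖^2)) :=
      norm_combine _ _ _ _ (by positivity) (by linarith) hest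
    have hnorm2 : ‖Fm g γ w (useq j + τ • dseq j)‖ ≤
        ((1-τ) + A * τ^2) * ‖Fm g γ w (useq j)‖ := by
      refine hnorm.trans ?_
      have hb1 : ‖dseq j‖^2 ≤ κ^2 * ‖Fm g γ w (useq j)‖^2 := by
        rw [show κ^2 * ‖Fm g γ w (useq j)‖^2 = (κ * ‖Fm g γ w (useq j)‖)^2 by ring]
        exact pow_le_pow_left₀ (norm_nonneg _) hdbj 2
      have hb2 : ‖Fm g γ w (useq j)‖^2 ≤ Φ * ‖Fm g γ w (useq j)‖ := by
        nlinarith [norm_nonneg (Fm g γ w (useq j))]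
      have hs0 : (0:ℝ) ≤ Real.sqrt n := Real.sqrt_nonneg _
      have hc : (0:ℝ) ≤ Real.sqrt n * γ * L * τ^2 := by positivity
      have h4 : ‖dseq j‖^2 ≤ κ^2 * Φ * ‖Fm g γ w (useq j)‖ := by
        nlinarith [mul_le_mul_of_nonneg_left hb2 (sq_nonneg κ)]
      rw [hAdef]
      linarith [mul_le_mul_of_nonneg_left h4 hc]
    have harith : ((1-τ) + A * τ^2)^2 ≤ 1 - 2*σ*τ := by
      have h1 : τ * (1+A)^2 ≤ 1 := by
        rw [← le_div_iff₀ (by positivity)]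
        calc τ ≤ τb := hττb
        _ ≤ 1/(1+A)^2 := hτbA
      exact arith_bound σ τ A hσ0 hσhalf.le hτ0 hτ1 hA0 h1
    have hfinal : Th g γ w (useq j + τ • dseq j) ≤ (1 - 2*σ*τ) * Th g γ w (useq j) := by
      rw [Th_eq_sq, Th_eq_sq]
      calc ‖Fm g γ w (useq j + τ • dseq j)‖^2 ≤ (((1-τ) + A * τ^2) * ‖Fm g γ w (useq j)‖)^2 := by
            apply pow_le_pow_left₀ (norm_nonneg _) hnorm2
      _ = ((1-τ) + A * τ^2)^2 * ‖Fm g γ w (useq j)‖^2 := by ring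
      _ ≤ (1 - 2*σ*τ) * ‖Fm g γ w (useq j)‖^2 := by
            apply mul_le_mul_of_nonneg_right harith (by positivity)
    exact hmin (l-1) (Nat.sub_lt (Nat.pos_of_ne_zero hl0) one_pos) hfinal
  -- Step 2: eventually the full step is accepted
  have hT0 : Th g γ w ustar = 0 := by rw [Th_eq_sq, hFz]; simp
  obtain ⟨ε₁, hε₁, hnoexc⟩ := Metric.eventually_nhds_iff.mp
    (noexc_eventually hg2 hγ hw ustar htot hFz)
  set B : ℝ := Real.sqrt n * γ * L * κ^2 with hBdef
  have hB0 : 0 ≤ B := by positivity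
  have hFt0 : Tendsto (fun j => ‖Fm g γ w (useq j)‖) atTop (𝓝 0) := by
    rw [hFz] at hFt; simpa using hFt
  have e1 : ∀ᶠ j in atTop, dist (useq j) ustar < min (min (ε/2) ε₁) 1 :=
    hconv.eventually (Metric.eventually_nhds_iff.mpr
      ⟨min (min (ε/2) ε₁) 1, by positivity, fun y hy => hy⟩)
  have e2 : ∀ᶠ j in atTop, κ * ‖Fm g γ w (useq j)‖ < ε/2 := by
    have := hFt0.const_mul κ
    rw [mul_zero] at this
    exact this.eventually (gt_mem_nhds (by positivity))
  have e3 : ∀ᶠ j in atTop, B^2 * Th g γ w (useq j) ≤ 1 - 2*σ := by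
    have h1 : Tendsto (fun j => B^2 * Th g γ w (useq j)) atTop (𝓝 0) := by
      have := hTt.const_mul (B^2)
      rw [hT0, mul_zero] at this
      exact this
    exact h1.eventually (eventually_le_nhds (by linarith))
  obtain ⟨j₀, hj₀⟩ := eventually_atTop.mp ((e1.and (e2.and e3)))
  refine ⟨j₀, fun j hj => ?_⟩
  obtain ⟨hj1, hj2, hj3⟩ := hj₀ j hj
  have hd1 : dist (useq j) ustar ≤ 1 := (hj1.trans_le (min_le_right _ _)).le
  have hstabu : Stab g γ w ustar (useq j) :=
    hstab (lt_of_lt_of_le hj1 (((min_le_left _ _).trans (min_le_left _ _)).trans (by linarith)))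
  have hdbj : ‖dseq j‖ ≤ κ * ‖Fm g γ w (useq j)‖ := hdb j hd1
  have hxdist : dist (useq j + (1:ℝ) • dseq j) ustar < ε₀ := by
    have h1 : dist (useq j + (1:ℝ) • dseq j) (useq j) = ‖dseq j‖ := by
      rw [dist_eq_norm, add_sub_cancel_left, one_smul]
    calc dist (useq j + (1:ℝ) • dseq j) ustar
        ≤ dist (useq j + (1:ℝ) • dseq j) (useq j) + dist (useq j) ustar := dist_triangle _ _ _
    _ < ‖dseq j‖ + ε/2 := by
        rw [h1]
        have := hj1.trans_le ((min_le_left _ _).trans (min_le_left _ _))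
        linarith
    _ ≤ κ * ‖Fm g γ w (useq j)‖ + ε/2 := by linarith [hdbj]
    _ < ε/2 + ε/2 := by linarith [hj2]
    _ = ε := by ring
    _ ≤ ε₀ := hεle0
  have hstabx : Stab g γ w ustar (useq j + (1:ℝ) • dseq j) := hstab hxdist
  have hnoexcj : ∀ k, k ∉ App g γ w (useq j) ∧ k ∉ Amm g γ w (useq j) ∧
      k ∉ Izp g γ w (useq j) ∧ k ∉ Izm g γ w (useq j) :=
    hnoexc (hj1.trans_le ((min_le_left _ _).trans (min_le_right _ _)))
  have hest := step_estimate hg2 hγ hw L hL ustar (useq j) (dseq j) 1 one_pos le_rfl htot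
    hstabu hstabx (hdirs j) (Or.inr hnoexcj)
  have hnorm : ‖Fm g γ w (useq j + (1:ℝ) • dseq j)‖ ≤
      (1-1) * ‖Fm g γ w (useq j)‖ + Real.sqrt n * (γ * ((L:ℝ) * 1^2 * ‖dseq j‖^2)) :=
    norm_combine _ _ _ _ (by positivity) (by norm_num) hest
  have hnorm2 : ‖Fm g γ w (useq j + (1:ℝ) • dseq j)‖ ≤ B * ‖Fm g γ w (useq j)‖^2 := by
    refine hnorm.trans ?_
    have hb1 : ‖dseq j‖^2 ≤ κ^2 * ‖Fm g γ w (useq j)‖^2 := by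
      rw [show κ^2 * ‖Fm g γ w (useq j)‖^2 = (κ * ‖Fm g γ w (useq j)‖)^2 by ring]
      exact pow_le_pow_left₀ (norm_nonneg _) hdbj 2
    have hc : (0:ℝ) ≤ Real.sqrt n * γ * L := by positivity
    rw [hBdef]
    have := mul_le_mul_of_nonneg_left hb1 hc
    linarith [this]
  have hkey : Th g γ w (useq j + dseq j) ≤ (1 - 2*σ) * Th g γ w (useq j) := by
    have h1 : useq j + dseq j = useq j + (1:ℝ) • dseq j := by rw [one_smul]
    rw [h1, Th_eq_sq, Th_eq_sq]
    calc ‖Fm g γ w (useq j + (1:ℝ) • dseq j)‖^2 ≤ (B * ‖Fm g γ w (useq j)‖^2)^2 :=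
          pow_le_pow_left₀ (norm_nonneg _) hnorm2 2
    _ = (B^2 * ‖Fm g γ w (useq j)‖^2) * ‖Fm g γ w (useq j)‖^2 := by ring
    _ ≤ (1 - 2*σ) * ‖Fm g γ w (useq j)‖^2 := by
          apply mul_le_mul_of_nonneg_right _ (by positivity)
          rw [← Th_eq_sq]; exact hj3
  exact ⟨hkey, armijo_full ⟨hβ0, hβ1⟩ (harm j) hkey⟩
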